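/- Let F, G : I → ℝ be differentiable functions on an interval I satisfying F' = −F² − G and G' = F(1 − 2G), with 1 − 2G(t) > 0 for all t ∈ I. Then the quantity E(t) = (1 + 2 F(t)²)/(1 − 2 G(t)) + ln(1 − 2 G(t)) is constant on I. Equivalently, 2F² = −(1 − 2G) ln(1 − 2G) + C₂ (1 − 2G) − 1 along the trajectory, where C₂ = (1 + 2 F(0)²)/(1 − 2 G(0)) + ln(1 − 2 G(0)). -/

import Mathlib

/-- First integral of the plane (d = 2) radially symmetric system
`F' = −F² − G`, `G' = F(1 − 2G)`: the quantity
`(1 + 2F²)/(1 − 2G) + ln(1 − 2G)` is constant along trajectories staying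
in the half-plane `1 − 2G > 0`. -/
theorem radial_first_integral_d_two (I : Set ℝ) (hI : Convex ℝ I) (F G : ℝ → ℝ)
    (hF : ∀ t ∈ I, HasDerivWithinAt F (-(F t) ^ 2 - G t) I t)
    (hG : ∀ t ∈ I, HasDerivWithinAt G (F t * (1 - 2 * G t)) I t)
    (hpos : ∀ t ∈ I, 0 < 1 - 2 * G t) :
    ∀ t ∈ I, ∀ t' ∈ I,
      (1 + 2 * (F t) ^ 2) / (1 - 2 * G t) + Real.log (1 - 2 * G t)
        = (1 + 2 * (F t') ^ 2) / (1 - 2 * G t') + Real.log (1 - 2 * G t') := by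
  set E : ℝ → ℝ := fun t =>
    (1 + 2 * (F t) ^ 2) / (1 - 2 * G t) + Real.log (1 - 2 * G t) with hE
  have key : ∀ t ∈ I, HasDerivWithinAt E 0 I t := by
    intro t ht
    have hu0 : (1 - 2 * G t) ≠ 0 := ne_of_gt (hpos t ht)
    have hu : HasDerivWithinAt (fun t => 1 - 2 * G t)
        (-(2 * (F t * (1 - 2 * G t)))) I t := by
      simpa using ((hG t ht).const_mul 2).const_sub 1
    have hnum : HasDerivWithinAt (fun t => 1 + 2 * (F t) ^ 2)
        (2 * (2 * F t ^ 1 * (-(F t) ^ 2 - G t))) I t := by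
      simpa using (((hF t ht).pow 2).const_mul 2).const_add 1
    have hdiv := hnum.div hu hu0
    have hlog := hu.log hu0
    have := hdiv.add hlog
    refine this.congr_deriv ?_
    field_simp
    ring
  intro t ht t' ht'
  have h := Convex.norm_image_sub_le_of_norm_hasFDerivWithin_le
    (f := E) (C := 0)
    (fun x hx => (key x hx).hasFDerivWithinAt)
    (fun x hx => by simp) hI ht ht'
  have : E t' - E t = 0 := by simpa using h
  have := sub_eq_zero.mp this
  simpa [hE] using this.symm
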